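/- The polynomials p_k(x,y) = sum_{l=0}^{k} (k choose l)^2 x^{2l} y^{2(k-l)} satisfy the recurrence: sum_{j=0}^{k} (-1)^j (k choose j) (x^2+y^2)^j p_{k-j}(x,y) equals (xy)^k (k choose k/2) if k is even, and 0 if k is odd. -/

import Mathlib

open Finset

/-- The weight polynomial `p_k(x,y) = ∑_{l=0}^{k} (k choose l)^2 x^{2l} y^{2(k-l)}`. -/
noncomputable def pPoly (k : ℕ) (x y : ℝ) : ℝ :=
  ∑ l ∈ Finset.range (k + 1), (k.choose l : ℝ) ^ 2 * x ^ (2 * l) * y ^ (2 * (k - l))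

/-- Choosing `a` then `b` from the rest equals choosing `a+b` then `a` of them. -/
lemma chain (N a b : ℕ) (h : a + b ≤ N) :
    N.choose a * (N - a).choose b = N.choose (a + b) * (a + b).choose a := by
  have := Nat.choose_mul (n := N) (k := a + b) (s := a) (Nat.le_add_right a b)
  simpa [Nat.add_sub_cancel_left] using this.symm

lemma tri (k j m : ℕ) :
    k.choose j * ((k - j).choose m * ((k - j - m).choose m)) =
      k.choose (2 * m) * (2 * m).choose m * ((k - 2 * m).choose j) := by
  rcases le_or_gt (j + 2 * m) k with h | h
  · have h1 : (k - j).choose m * ((k - j) - m).choose m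
        = (k - j).choose (m + m) * (m + m).choose m := chain (k - j) m m (by omega)
    have h2 : k.choose j * (k - j).choose (m + m)
        = k.choose (j + (m + m)) * (j + (m + m)).choose j := chain k j (m + m) (by omega)
    have h3 : k.choose (2 * m) * (k - 2 * m).choose j
        = k.choose (2 * m + j) * (2 * m + j).choose (2 * m) := chain k (2 * m) j (by omega)
    have h4 : (j + (m + m)).choose j = (2 * m + j).choose (2 * m) := by
      rw [← Nat.choose_symm (by omega : j ≤ j + (m + m))]
      congr 1 <;> omega
    have h5 : j + (m + m) = 2 * m + j := by omega
    calc k.choose j * ((k - j).choose m * ((k - j - m).choose m))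
        = k.choose j * (k - j).choose (m + m) * (m + m).choose m := by
          rw [h1]; ring
      _ = k.choose (j + (m + m)) * (j + (m + m)).choose j * (m + m).choose m := by rw [h2]
      _ = k.choose (2 * m + j) * (2 * m + j).choose (2 * m) * (m + m).choose m := by
          rw [h4, h5]
      _ = k.choose (2 * m) * (2 * m).choose m * ((k - 2 * m).choose j) := by
          rw [← h3]; have : m + m = 2 * m := by omega
          rw [this]; ring
  · have L : k.choose j * ((k - j).choose m * ((k - j - m).choose m)) = 0 := by
      rcases Nat.lt_or_ge k j with hj | hj
      · simp [Nat.choose_eq_zero_of_lt hj]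
      · rcases Nat.lt_or_ge (k - j) m with h2 | h2
        · simp [Nat.choose_eq_zero_of_lt h2]
        · have : k - j - m < m := by omega
          simp [Nat.choose_eq_zero_of_lt this]
    have R : k.choose (2 * m) * (2 * m).choose m * ((k - 2 * m).choose j) = 0 := by
      rcases Nat.lt_or_ge k (2 * m) with h2 | h2
      · simp [Nat.choose_eq_zero_of_lt h2]
      · have : k - 2 * m < j := by omega
        simp [Nat.choose_eq_zero_of_lt this]
    rw [L, R]

lemma tri2 (n l m : ℕ) (hm : m ≤ l) :
    n.choose m * ((n - m).choose m * ((n - 2 * m).choose (l - m))) =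
      n.choose l * (l.choose m * (n - l).choose m) := by
  rcases le_or_gt (l + m) n with h | h
  · have h1 : (n - m).choose m * ((n - m) - m).choose (l - m)
        = (n - m).choose (m + (l - m)) * (m + (l - m)).choose m := chain (n - m) m (l - m) (by omega)
    have hml : m + (l - m) = l := by omega
    have h2 : n.choose m * (n - m).choose l
        = n.choose (m + l) * (m + l).choose m := chain n m l (by omega)
    have h3 : n.choose l * (n - l).choose m
        = n.choose (l + m) * (l + m).choose l := chain n l m (by omega)
    have h4 : (m + l).choose m = (l + m).choose l := by
      rw [← Nat.choose_symm (by omega : l ≤ l + m)]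
      congr 1 <;> omega
    have hsub : n - 2 * m = (n - m) - m := by omega
    calc n.choose m * ((n - m).choose m * ((n - 2 * m).choose (l - m)))
        = n.choose m * ((n - m).choose m * (((n - m) - m).choose (l - m))) := by rw [hsub]
      _ = n.choose m * ((n - m).choose l * l.choose m) := by rw [h1, hml]
      _ = (n.choose m * (n - m).choose l) * l.choose m := by ring
      _ = n.choose (m + l) * (m + l).choose m * l.choose m := by rw [h2]
      _ = (n.choose (l + m) * (l + m).choose l) * l.choose m := by
          rw [h4, Nat.add_comm m l]
      _ = n.choose l * (l.choose m * (n - l).choose m) := by rw [← h3]; ring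
  · have L : n.choose m * ((n - m).choose m * ((n - 2 * m).choose (l - m))) = 0 := by
      rcases Nat.lt_or_ge n (2 * m) with h2 | h2
      · rcases Nat.lt_or_ge n m with h3 | h3
        · simp [Nat.choose_eq_zero_of_lt h3]
        · have : n - m < m := by omega
          simp [Nat.choose_eq_zero_of_lt this]
      · have : n - 2 * m < l - m := by omega
        simp [Nat.choose_eq_zero_of_lt this]
    have R : n.choose l * (l.choose m * (n - l).choose m) = 0 := by
      rcases Nat.lt_or_ge n l with h2 | h2
      · simp [Nat.choose_eq_zero_of_lt h2]
      · have : n - l < m := by omega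
        simp [Nat.choose_eq_zero_of_lt this]
    rw [L, R]

lemma vand (l r : ℕ) :
    ∑ m ∈ Finset.range (l + 1), l.choose m * r.choose m = (l + r).choose l := by
  rw [Nat.add_choose_eq, Finset.Nat.sum_antidiagonal_eq_sum_range_succ_mk]
  have := Finset.sum_range_reflect (fun m => l.choose m * r.choose m) (l + 1)
  rw [← this]
  apply Finset.sum_congr rfl
  intro i hi
  simp only [Finset.mem_range] at hi
  have h1 : l + 1 - 1 - i = l - i := by omega
  rw [h1, Nat.choose_symm (by omega : i ≤ l)]

lemma pPoly_eq (n : ℕ) (x y : ℝ) :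
    pPoly n x y = ∑ m ∈ Finset.range (n + 1),
      ((n.choose m * (n - m).choose m : ℕ) : ℝ)
        * (x ^ 2 + y ^ 2) ^ (n - 2 * m) * (x * y) ^ (2 * m) := by
  set t : ℕ → ℕ → ℝ := fun m l =>
    ((n.choose m * ((n - m).choose m * ((n - 2 * m).choose (l - m))) : ℕ) : ℝ)
      * x ^ (2 * l) * y ^ (2 * (n - l)) with ht
  have key : ∀ m ∈ Finset.range (n + 1),
      ((n.choose m * (n - m).choose m : ℕ) : ℝ)
          * (x ^ 2 + y ^ 2) ^ (n - 2 * m) * (x * y) ^ (2 * m)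
        = ∑ l ∈ Finset.Ico m (n + 1), t m l := by
    intro m hm
    simp only [Finset.mem_range] at hm
    rw [add_pow, Finset.mul_sum, Finset.sum_mul]
    have hstep : ∀ i ∈ Finset.range (n - 2 * m + 1),
        ((n.choose m * (n - m).choose m : ℕ) : ℝ)
            * ((x ^ 2) ^ i * (y ^ 2) ^ (n - 2 * m - i) * ((n - 2 * m).choose i : ℝ))
            * (x * y) ^ (2 * m)
          = t m (m + i) := by
      intro i hi
      simp only [Finset.mem_range] at hi
      have hii : m + i - m = i := by omega
      rcases le_or_gt (2 * m) n with h2 | h2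
      · have e2 : n - (m + i) = (n - 2 * m - i) + m := by omega
        simp only [ht, e2, hii]
        push_cast
        ring
      · have hz : (n - m).choose m = 0 := Nat.choose_eq_zero_of_lt (by omega)
        simp [ht, hz]
    rw [Finset.sum_congr rfl hstep]
    have hIco : ∑ l ∈ Finset.Ico m (m + (n - 2 * m + 1)), t m l
        = ∑ i ∈ Finset.range (n - 2 * m + 1), t m (m + i) := by
      rw [Finset.sum_Ico_eq_sum_range, Nat.add_sub_cancel_left]
    rw [← hIco]
    have hub : m + (n - 2 * m + 1) ≤ n + 1 := by omega
    apply Finset.sum_subset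
    · exact Finset.Ico_subset_Ico le_rfl hub
    · intro l hl hnl
      simp only [Finset.mem_Ico] at hl hnl
      have : n - 2 * m < l - m := by omega
      simp [ht, Nat.choose_eq_zero_of_lt this]
  rw [Finset.sum_congr rfl key, Finset.range_eq_Ico, Finset.sum_Ico_Ico_comm]
  rw [pPoly, Finset.range_eq_Ico]
  apply Finset.sum_congr rfl
  intro l hl
  simp only [Finset.mem_Ico] at hl
  have hln : l ≤ n := by omega
  symm
  have hnat : ∑ m ∈ Finset.range (l + 1),
      n.choose m * ((n - m).choose m * ((n - 2 * m).choose (l - m)))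
        = n.choose l * n.choose l := by
    rw [Finset.sum_congr rfl (fun m hm => tri2 n l m (by
      simp only [Finset.mem_range] at hm; omega))]
    rw [← Finset.mul_sum, vand l (n - l)]
    congr 2
    omega
  calc ∑ m ∈ Finset.Ico 0 (l + 1), t m l
      = ((∑ m ∈ Finset.range (l + 1),
          n.choose m * ((n - m).choose m * ((n - 2 * m).choose (l - m))) : ℕ) : ℝ)
          * x ^ (2 * l) * y ^ (2 * (n - l)) := by
        rw [← Finset.range_eq_Ico, Nat.cast_sum, Finset.sum_mul, Finset.sum_mul]
    _ = (n.choose l : ℝ) ^ 2 * x ^ (2 * l) * y ^ (2 * (n - l)) := by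
        rw [hnat]; push_cast; ring

/-- The inclusion–exclusion recurrence for the polynomials `p_k`:
`∑_{j=0}^{k} (-1)^j (k choose j) (x²+y²)^j p_{k-j}(x,y)` equals `(xy)^k (k choose k/2)`
for even `k`, and `0` for odd `k`. -/
theorem pPoly_recurrence (k : ℕ) (x y : ℝ) :
    ∑ j ∈ Finset.range (k + 1),
        (-1 : ℝ) ^ j * (k.choose j : ℝ) * (x ^ 2 + y ^ 2) ^ j * pPoly (k - j) x y
      = if Even k then (x * y) ^ k * (k.choose (k / 2) : ℝ) else 0 := by
  set u : ℕ → ℕ → ℝ := fun j m =>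
    (-1 : ℝ) ^ j * ((k.choose (2 * m) * (2 * m).choose m * ((k - 2 * m).choose j) : ℕ) : ℝ)
      * (x ^ 2 + y ^ 2) ^ (k - 2 * m) * (x * y) ^ (2 * m) with hu
  have step1 : ∀ j ∈ Finset.range (k + 1),
      (-1 : ℝ) ^ j * (k.choose j : ℝ) * (x ^ 2 + y ^ 2) ^ j * pPoly (k - j) x y
        = ∑ m ∈ Finset.range (k + 1), u j m := by
    intro j hj
    simp only [Finset.mem_range] at hj
    rw [pPoly_eq]
    have hext : ∑ m ∈ Finset.range (k - j + 1),
        (((k - j).choose m * (k - j - m).choose m : ℕ) : ℝ)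
          * (x ^ 2 + y ^ 2) ^ (k - j - 2 * m) * (x * y) ^ (2 * m)
        = ∑ m ∈ Finset.range (k + 1),
        (((k - j).choose m * (k - j - m).choose m : ℕ) : ℝ)
          * (x ^ 2 + y ^ 2) ^ (k - j - 2 * m) * (x * y) ^ (2 * m) := by
      apply Finset.sum_subset (Finset.range_subset_range.2 (by omega))
      intro m hm hnm
      simp only [Finset.mem_range] at hm hnm
      have : k - j < m := by omega
      simp [Nat.choose_eq_zero_of_lt this]
    rw [hext, Finset.mul_sum]
    apply Finset.sum_congr rfl
    intro m hm
    simp only [Finset.mem_range] at hm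
    rcases le_or_gt (j + 2 * m) k with h | h
    · have he : k - 2 * m = j + (k - j - 2 * m) := by omega
      have hc : ((k.choose (2 * m) * (2 * m).choose m * ((k - 2 * m).choose j) : ℕ) : ℝ)
          = (k.choose j : ℝ) * (((k - j).choose m * (k - j - m).choose m : ℕ) : ℝ) := by
        rw [← tri k j m]; push_cast; ring
      rw [hu]
      simp only []
      rw [hc, he, pow_add]
      push_cast
      ring
    · have hz : k.choose (2 * m) * (2 * m).choose m * ((k - 2 * m).choose j) = 0 := by
        rcases Nat.lt_or_ge k (2 * m) with h2 | h2
        · simp [Nat.choose_eq_zero_of_lt h2]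
        · have : k - 2 * m < j := by omega
          simp [Nat.choose_eq_zero_of_lt this]
      have hz' : k.choose j * ((k - j).choose m * ((k - j - m).choose m)) = 0 := by
        rw [tri k j m, hz]
      have hr : u j m = 0 := by simp only [hu]; rw [hz]; simp
      rw [hr]
      rcases Nat.mul_eq_zero.mp hz' with h0 | h0
      · simp [h0]
      · simp [h0]
  rw [Finset.sum_congr rfl step1, Finset.sum_comm]
  have step3 : ∀ m ∈ Finset.range (k + 1),
      ∑ j ∈ Finset.range (k + 1), u j m
        = if k = 2 * m then (x * y) ^ k * (k.choose (k / 2) : ℝ) else 0 := by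
    intro m hm
    simp only [Finset.mem_range] at hm
    have hfac : ∀ j, u j m
        = (((k.choose (2 * m) * (2 * m).choose m : ℕ) : ℝ)
            * (x ^ 2 + y ^ 2) ^ (k - 2 * m) * (x * y) ^ (2 * m))
          * ((-1 : ℝ) ^ j * (((k - 2 * m).choose j : ℕ) : ℝ)) := by
      intro j
      rw [hu]
      push_cast
      ring
    rw [Finset.sum_congr rfl (fun j _ => hfac j), ← Finset.mul_sum]
    have hB : ∑ j ∈ Finset.range (k + 1), ((-1 : ℝ) ^ j * (((k - 2 * m).choose j : ℕ) : ℝ))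
        = if k - 2 * m = 0 then 1 else 0 := by
      have htrim : ∑ j ∈ Finset.range (k - 2 * m + 1),
          ((-1 : ℝ) ^ j * (((k - 2 * m).choose j : ℕ) : ℝ))
          = ∑ j ∈ Finset.range (k + 1), ((-1 : ℝ) ^ j * (((k - 2 * m).choose j : ℕ) : ℝ)) := by
        apply Finset.sum_subset (Finset.range_subset_range.2 (by omega))
        intro jj hj hnj
        simp only [Finset.mem_range] at hj hnj
        have : k - 2 * m < jj := by omega
        simp [Nat.choose_eq_zero_of_lt this]
      rw [← htrim]
      have h2 := Int.alternating_sum_range_choose (n := k - 2 * m)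
      have h3 : (((∑ j ∈ Finset.range (k - 2 * m + 1),
          ((-1) ^ j * ((k - 2 * m).choose j : ℤ)) : ℤ)) : ℝ)
          = (((if k - 2 * m = 0 then 1 else 0 : ℤ)) : ℝ) := by rw [h2]
      push_cast at h3
      exact h3
    rw [hB]
    by_cases hke : k = 2 * m
    · have h1 : k.choose (2 * m) = 1 := by rw [← hke, Nat.choose_self]
      have h2 : (2 * m).choose m = k.choose (k / 2) := by
        have : k / 2 = m := by omega
        rw [← hke, this]
      have h3 : k - 2 * m = 0 := by omega
      rw [if_pos h3, if_pos hke, h3, h1, h2, pow_zero]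
      have h4 : 2 * m = k := hke.symm
      rw [h4]
      push_cast
      ring
    · rw [if_neg hke]
      rcases le_or_gt (2 * m) k with h | h
      · rw [if_neg (by omega : ¬ (k - 2 * m = 0)), mul_zero]
      · have hz : k.choose (2 * m) = 0 := Nat.choose_eq_zero_of_lt h
        simp [hz]
  rw [Finset.sum_congr rfl step3]
  rcases Nat.even_or_odd k with he | ho
  · obtain ⟨t, ht⟩ := he
    rw [if_pos ⟨t, ht⟩]
    have hcong : ∀ m ∈ Finset.range (k + 1),
        (if k = 2 * m then (x * y) ^ k * (k.choose (k / 2) : ℝ) else 0)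
          = (if m = t then (x * y) ^ k * (k.choose (k / 2) : ℝ) else 0) :=
      fun m _ => if_congr (by omega) rfl rfl
    rw [Finset.sum_congr rfl hcong,
      Finset.sum_ite_eq' (Finset.range (k + 1)) t (fun _ => (x * y) ^ k * (k.choose (k / 2) : ℝ)),
      if_pos (Finset.mem_range.2 (by omega))]
  · rw [if_neg (Nat.not_even_iff_odd.mpr ho)]
    apply Finset.sum_eq_zero
    intro m hm
    rw [if_neg]
    obtain ⟨t, ht⟩ := ho
    omega
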